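/- Let $D$ be an approximate length subset of a metric space $X$. Then for every $x_0,x_1\in D$ and every $L>d(x_0,x_1)$ there exists a family of points $\{x_\vartheta\}_{\vartheta\in\mathbb D}\subset D$ indexed by the dyadic rationals $\mathbb D=\{k2^{-n}:0\le k\le 2^n\}$ in $[0,1]$, with $x_0=x_0$, $x_1=x_1$, and $d(x_{\vartheta'},x_{\vartheta''})\le L|\vartheta'-\vartheta''|$ for all $\vartheta',\vartheta''\in\mathbb D$. -/

import Mathlib

/-- `D` is an approximate length subset: any two of its points admit `ε`-midpoints in `D`. -/
def IsApproxLengthSubset {X : Type*} [MetricSpace X] (D : Set X) : Prop :=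
  ∀ x₀ ∈ D, ∀ x₁ ∈ D, ∀ ε : ℝ, ε ∈ Set.Ioo (0:ℝ) 1 → ∃ x ∈ D,
    dist x₀ x ^ 2 + dist x x₁ ^ 2 ≤ (1/2) * dist x₀ x₁ ^ 2 * (1 + ε ^ 2 / 4)

/-- The set of dyadic rationals in `[0,1]`. -/
def dyadics : Set ℝ := {θ : ℝ | ∃ k n : ℕ, k ≤ 2 ^ n ∧ θ = (k : ℝ) / 2 ^ n}

namespace Stmt2Aux

lemma key_est (u v d ε : ℝ) (hd : 0 ≤ d) (hε0 : 0 < ε)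
    (htri : d ≤ u + v) (htri2 : u ≤ d + v)
    (h : u^2 + v^2 ≤ (1/2) * d^2 * (1 + ε^2/4)) :
    u ≤ d / 2 * (1 + ε) := by
  nlinarith [mul_nonneg (sub_nonneg.2 htri) (sub_nonneg.2 htri2), sq_nonneg (2*u - d),
    sq_nonneg (2*u - d - d*ε/2), mul_pos hε0 hε0, mul_nonneg hd hε0.le]

noncomputable def P (ε : ℝ) (n : ℕ) : ℝ := ∏ k ∈ Finset.range n, (1 + ε/2^(k+1))

lemma P_succ (ε : ℝ) (n : ℕ) : P ε (n+1) = P ε n * (1 + ε/2^(n+1)) :=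
  Finset.prod_range_succ _ n

lemma P_nonneg {ε : ℝ} (hε : 0 < ε) (n : ℕ) : 0 ≤ P ε n :=
  Finset.prod_nonneg fun k _ => by positivity

lemma P_le {ε : ℝ} (hε : ε ∈ Set.Ioo (0:ℝ) (1/2)) (n : ℕ) :
    P ε n ≤ 1 + 2*ε*(1 - (1/2)^n) := by
  obtain ⟨hε1, hε2⟩ := hε
  induction n with
  | zero => simp [P]
  | succ n ih =>
    rw [P_succ]
    obtain ⟨y, hy⟩ : ∃ y:ℝ, 2^(n+1) = y := ⟨_, rfl⟩
    rw [hy]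
    have h1 : (0:ℝ) < y := hy ▸ (by positivity)
    have h2 : ((1:ℝ)/2)^n = 2/y := by
      rw [← hy, one_div, inv_pow, pow_succ]; field_simp
    have h4 : ((1:ℝ)/2)^(n+1) = 1/y := by rw [← hy, one_div, inv_pow, one_div]
    have h3 : (0:ℝ) ≤ 1 + ε/y := by positivity
    have hP0 := P_nonneg hε1 n
    calc P ε n * (1 + ε/y) ≤ (1 + 2*ε*(1 - (1/2)^n)) * (1 + ε/y) :=
          mul_le_mul_of_nonneg_right ih h3
      _ ≤ 1 + 2*ε*(1 - (1/2)^(n+1)) := by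
          rw [h2, h4, ← sub_nonneg]
          have e : (1 + 2*ε*(1 - 1/y)) - (1 + 2*ε*(1 - 2/y)) * (1 + ε/y)
              = ε/y * ((1 - 2*ε) + 4*ε/y) := by
            field_simp
            ring
          rw [e]
          have : (0:ℝ) ≤ 1 - 2*ε := by linarith
          positivity

lemma P_le' {ε : ℝ} (hε : ε ∈ Set.Ioo (0:ℝ) (1/2)) (n : ℕ) : P ε n ≤ 1 + 2*ε := by
  have := P_le hε n
  have h5 : (0:ℝ) ≤ (1/2:ℝ)^n := by positivity
  nlinarith [hε.1]

variable {X : Type*} [MetricSpace X] {D : Set X}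

open Classical in
noncomputable def midpt (hD : IsApproxLengthSubset D) (z : X) (a b : X) (ε : ℝ) : X :=
  if h : a ∈ D ∧ b ∈ D ∧ ε ∈ Set.Ioo (0:ℝ) 1 then (hD a h.1 b h.2.1 ε h.2.2).choose else z

lemma midpt_spec (hD : IsApproxLengthSubset D) (z a b : X) (ε : ℝ)
    (ha : a ∈ D) (hb : b ∈ D) (hε : ε ∈ Set.Ioo (0:ℝ) 1) :
    midpt hD z a b ε ∈ D ∧
      dist a (midpt hD z a b ε) ≤ dist a b / 2 * (1 + ε) ∧
      dist (midpt hD z a b ε) b ≤ dist a b / 2 * (1 + ε) := by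
  have h : a ∈ D ∧ b ∈ D ∧ ε ∈ Set.Ioo (0:ℝ) 1 := ⟨ha, hb, hε⟩
  rw [midpt]; rw [dif_pos h]
  obtain ⟨hmem, hsq⟩ := (hD a h.1 b h.2.1 ε h.2.2).choose_spec
  set x := (hD a h.1 b h.2.1 ε h.2.2).choose
  have htri : dist a b ≤ dist a x + dist x b := dist_triangle a x b
  have htri2 : dist a x ≤ dist a b + dist x b := by
    have := dist_triangle a b x; rw [dist_comm x b]; linarith
  have htri3 : dist x b ≤ dist x a + dist a b := dist_triangle x a b
  refine ⟨hmem, ?_, ?_⟩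
  · exact key_est _ _ _ _ dist_nonneg hε.1 htri htri2 hsq
  · refine key_est (dist x b) (dist a x) _ _ dist_nonneg hε.1 (by linarith)
      (by rw [dist_comm x a] at htri3; linarith) (by linarith)

noncomputable def gseq (hD : IsApproxLengthSubset D) (x₀ x₁ : X) (ε : ℝ) : ℕ → ℕ → X
  | 0, k => if k = 0 then x₀ else x₁
  | n+1, k => if k % 2 = 0 then gseq hD x₀ x₁ ε n (k/2)
      else midpt hD x₀ (gseq hD x₀ x₁ ε n (k/2)) (gseq hD x₀ x₁ ε n (k/2+1)) (ε/2^(n+1))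

variable (hD : IsApproxLengthSubset D) (x₀ x₁ : X) (ε : ℝ)

lemma gseq_even (n k : ℕ) (h : k % 2 = 0) :
    gseq hD x₀ x₁ ε (n+1) k = gseq hD x₀ x₁ ε n (k/2) := by
  rw [gseq, if_pos h]

lemma gseq_odd (n k : ℕ) (h : ¬ k % 2 = 0) :
    gseq hD x₀ x₁ ε (n+1) k
    = midpt hD x₀ (gseq hD x₀ x₁ ε n (k/2)) (gseq hD x₀ x₁ ε n (k/2+1)) (ε/2^(n+1)) := by
  rw [gseq, if_neg h]

lemma eps_mem {ε : ℝ} (hε : ε ∈ Set.Ioo (0:ℝ) (1/2)) (n : ℕ) :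
    ε/2^(n+1) ∈ Set.Ioo (0:ℝ) 1 := by
  constructor
  · exact div_pos hε.1 (by positivity)
  · rw [div_lt_one (by positivity)]
    have : (1:ℝ) ≤ 2^(n+1) := one_le_pow₀ (by norm_num)
    linarith [hε.2]

lemma gseq_mem (hx₀ : x₀ ∈ D) (hx₁ : x₁ ∈ D) (hε : ε ∈ Set.Ioo (0:ℝ) (1/2)) : ∀ n k, gseq hD x₀ x₁ ε n k ∈ D := by
  intro n
  induction n with
  | zero =>
    intro k
    by_cases h : k = 0 <;> simp [gseq, h, hx₀, hx₁]
  | succ n ih =>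
    intro k
    by_cases h : k % 2 = 0
    · rw [gseq_even hD x₀ x₁ ε n k h]; exact ih _
    · rw [gseq_odd hD x₀ x₁ ε n k h]
      exact (midpt_spec hD x₀ _ _ _ (ih _) (ih _) (eps_mem hε n)).1

lemma gseq_step (hx₀ : x₀ ∈ D) (hx₁ : x₁ ∈ D) (hε : ε ∈ Set.Ioo (0:ℝ) (1/2)) : ∀ n, ∀ k < 2^n,
    dist (gseq hD x₀ x₁ ε n k) (gseq hD x₀ x₁ ε n (k+1))
      ≤ dist x₀ x₁ * P ε n / 2^n := by
  intro n
  induction n with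
  | zero =>
    intro k hk
    interval_cases k
    simp [gseq, P]
  | succ n ih =>
    intro k hk
    have h2n : (2:ℕ)^(n+1) = 2 * 2^n := by rw [pow_succ]; ring
    have hεn := eps_mem hε n
    have hεn' : (0:ℝ) ≤ 1 + ε/2^(n+1) := by
      have := (eps_mem hε n).1; linarith
    have hPrw : dist x₀ x₁ * P ε n / 2^n / 2 * (1 + ε/2^(n+1))
        = dist x₀ x₁ * P ε (n+1) / 2^(n+1) := by
      rw [P_succ, pow_succ]; ring
    by_cases h : k % 2 = 0
    · -- k = 2j
      have hj : k / 2 < 2^n := by omega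
      have hk1 : ¬ (k+1) % 2 = 0 := by omega
      have e1 : (k+1)/2 = k/2 := by omega
      rw [gseq_even hD x₀ x₁ ε n k h, gseq_odd hD x₀ x₁ ε n (k+1) hk1, e1]
      have hmid := (midpt_spec hD x₀ _ _ _
        (gseq_mem hD x₀ x₁ ε hx₀ hx₁ hε n (k/2)) (gseq_mem hD x₀ x₁ ε hx₀ hx₁ hε n (k/2+1))
        hεn).2.1
      refine hmid.trans ?_
      rw [← hPrw]
      have := ih (k/2) hj
      have hh : dist (gseq hD x₀ x₁ ε n (k/2)) (gseq hD x₀ x₁ ε n (k/2+1)) / 2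
          ≤ dist x₀ x₁ * P ε n / 2^n / 2 := by linarith
      exact mul_le_mul_of_nonneg_right hh hεn'
    · -- k = 2j+1
      have hj : k / 2 + 1 ≤ 2^n := by omega
      have hj' : k / 2 < 2^n := by omega
      have hk1 : (k+1) % 2 = 0 := by omega
      have e1 : (k+1)/2 = k/2 + 1 := by omega
      rw [gseq_odd hD x₀ x₁ ε n k h, gseq_even hD x₀ x₁ ε n (k+1) hk1, e1]
      have hmid := (midpt_spec hD x₀ _ _ _
        (gseq_mem hD x₀ x₁ ε hx₀ hx₁ hε n (k/2)) (gseq_mem hD x₀ x₁ ε hx₀ hx₁ hε n (k/2+1))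
        hεn).2.2
      refine hmid.trans ?_
      rw [← hPrw]
      have := ih (k/2) hj'
      have hh : dist (gseq hD x₀ x₁ ε n (k/2)) (gseq hD x₀ x₁ ε n (k/2+1)) / 2
          ≤ dist x₀ x₁ * P ε n / 2^n / 2 := by linarith
      exact mul_le_mul_of_nonneg_right hh hεn'

lemma gseq_chain (hx₀ : x₀ ∈ D) (hx₁ : x₁ ∈ D) (hε : ε ∈ Set.Ioo (0:ℝ) (1/2)) : ∀ n c a, a + c ≤ 2^n →
    dist (gseq hD x₀ x₁ ε n a) (gseq hD x₀ x₁ ε n (a+c))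
      ≤ c * (dist x₀ x₁ * P ε n / 2^n) := by
  intro n c
  induction c with
  | zero => intro a _; simp
  | succ c ih =>
    intro a ha
    have h1 := ih a (by omega)
    have h2 := gseq_step hD x₀ x₁ ε hx₀ hx₁ hε n (a+c) (by omega)
    calc dist (gseq hD x₀ x₁ ε n a) (gseq hD x₀ x₁ ε n (a+(c+1)))
        ≤ dist (gseq hD x₀ x₁ ε n a) (gseq hD x₀ x₁ ε n (a+c))
          + dist (gseq hD x₀ x₁ ε n (a+c)) (gseq hD x₀ x₁ ε n (a+c+1)) := by
          rw [show a+(c+1) = a+c+1 by omega]; exact dist_triangle _ _ _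
      _ ≤ (((c:ℕ)+1:ℕ) : ℝ) * (dist x₀ x₁ * P ε n / 2^n) := by push_cast; linarith

lemma gseq_lift : ∀ m n k, gseq hD x₀ x₁ ε (n+m) (k*2^m) = gseq hD x₀ x₁ ε n k := by
  intro m
  induction m with
  | zero => intro n k; simp
  | succ m ih =>
    intro n k
    obtain ⟨j, hj⟩ : ∃ j, k*2^m = j := ⟨_, rfl⟩
    have e : k*2^(m+1) = 2*j := by rw [pow_succ, ← hj]; ring
    have h : (k*2^(m+1)) % 2 = 0 := by omega
    rw [show n + (m+1) = (n+m)+1 by omega, gseq_even hD x₀ x₁ ε (n+m) _ h,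
      show k*2^(m+1)/2 = k*2^m by omega]
    exact ih n k

lemma gseq_eq (n m k j : ℕ) (h : k * 2^m = j * 2^n) :
    gseq hD x₀ x₁ ε n k = gseq hD x₀ x₁ ε m j := by
  have h1 := gseq_lift hD x₀ x₁ ε m n k
  have h2 := gseq_lift hD x₀ x₁ ε n m j
  rw [← h1, ← h2, h, Nat.add_comm n m]

lemma gseq_zero (n : ℕ) : gseq hD x₀ x₁ ε n 0 = x₀ := by
  have h := gseq_lift hD x₀ x₁ ε n 0 0
  rw [zero_mul, zero_add] at h
  rw [h, gseq]
  simp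

lemma gseq_one (n : ℕ) : gseq hD x₀ x₁ ε n (2^n) = x₁ := by
  have h := gseq_lift hD x₀ x₁ ε n 0 1
  rw [one_mul, zero_add] at h
  rw [h, gseq]
  simp



lemma gseq_dist (hx₀ : x₀ ∈ D) (hx₁ : x₁ ∈ D) (hε : ε ∈ Set.Ioo (0:ℝ) (1/2))
    (N a b : ℕ) (hab : a ≤ b) (hb : b ≤ 2^N) :
    dist (gseq hD x₀ x₁ ε N a) (gseq hD x₀ x₁ ε N b)
      ≤ ((b:ℝ) - (a:ℝ)) * (dist x₀ x₁ * P ε N / 2^N) := by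
  have h := gseq_chain hD x₀ x₁ ε hx₀ hx₁ hε N (b-a) a (by omega)
  rw [show a + (b-a) = b by omega] at h
  rw [Nat.cast_sub hab] at h
  exact h

end Stmt2Aux

open Stmt2Aux in
theorem stmt2 {X : Type*} [MetricSpace X] (D : Set X)
    (hD : IsApproxLengthSubset D) (x₀ x₁ : X) (hx₀ : x₀ ∈ D) (hx₁ : x₁ ∈ D)
    (L : ℝ) (hL : dist x₀ x₁ < L) :
    ∃ f : ℝ → X, (∀ θ ∈ dyadics, f θ ∈ D) ∧ f 0 = x₀ ∧ f 1 = x₁ ∧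
      ∀ θ' ∈ dyadics, ∀ θ'' ∈ dyadics, dist (f θ') (f θ'') ≤ L * |θ' - θ''| := by
  classical
  set d := dist x₀ x₁ with hd
  set ε : ℝ := min (1/3) ((L - d)/(2*(d+1))) with hεdef
  have hd0 : (0:ℝ) ≤ d := dist_nonneg
  have hLd : (0:ℝ) < L - d := by linarith
  have hε : ε ∈ Set.Ioo (0:ℝ) (1/2) :=
    ⟨lt_min (by norm_num) (by positivity),
      lt_of_le_of_lt (min_le_left _ _) (by norm_num)⟩
  have hdL : d * (1 + 2*ε) ≤ L := by
    have h1 : ε ≤ (L-d)/(2*(d+1)) := min_le_right _ _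
    have h2 : (0:ℝ) < 2*(d+1) := by linarith
    rw [le_div_iff₀ h2] at h1
    nlinarith [hε.1.le]
  have hbnd : ∀ N : ℕ, d * P ε N ≤ L := by
    intro N
    have h1 := P_le' hε N
    have h2 := P_nonneg hε.1 N
    nlinarith
  refine ⟨fun θ => if h : θ ∈ dyadics then
      gseq hD x₀ x₁ ε h.choose_spec.choose h.choose else x₀, ?_, ?_, ?_, ?_⟩
  · intro θ hθ
    dsimp only
    rw [dif_pos hθ]
    exact gseq_mem hD x₀ x₁ ε hx₀ hx₁ hε _ _
  · have h0 : (0:ℝ) ∈ dyadics := ⟨0, 0, by norm_num⟩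
    dsimp only
    rw [dif_pos h0]
    obtain ⟨-, heq⟩ := h0.choose_spec.choose_spec
    generalize hgen : h0.choose_spec.choose = nn at heq ⊢
    have hc : h0.choose = 0 := by
      have h2 := heq.symm
      rw [div_eq_iff (by positivity : ((2:ℝ)^nn) ≠ 0)] at h2
      have : (h0.choose : ℝ) = 0 := by simpa using h2
      exact_mod_cast this
    rw [hc, gseq_zero]
  · have h1 : (1:ℝ) ∈ dyadics := ⟨1, 0, by norm_num⟩
    dsimp only
    rw [dif_pos h1]
    obtain ⟨-, heq⟩ := h1.choose_spec.choose_spec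
    generalize hgen : h1.choose_spec.choose = nn at heq ⊢
    have hc : h1.choose = 2^nn := by
      have h2 := heq.symm
      rw [div_eq_iff (by positivity : ((2:ℝ)^nn) ≠ 0)] at h2
      have : (h1.choose : ℝ) = 2^nn := by simpa using h2
      exact_mod_cast this
    rw [hc, gseq_one]
  · intro θ' hθ' θ'' hθ''
    dsimp only
    rw [dif_pos hθ', dif_pos hθ'']
    obtain ⟨hk, hθeq⟩ := hθ'.choose_spec.choose_spec
    obtain ⟨hj, hθeq'⟩ := hθ''.choose_spec.choose_spec
    generalize hθ'.choose_spec.choose = n at hk hθeq ⊢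
    generalize hθ'.choose = k at hk hθeq ⊢
    generalize hθ''.choose_spec.choose = m at hj hθeq' ⊢
    generalize hθ''.choose = j at hj hθeq' ⊢
    set N := n + m with hNdef
    have e2N : (2:ℝ)^N = 2^n * 2^m := by rw [hNdef, pow_add]
    have ea : gseq hD x₀ x₁ ε n k = gseq hD x₀ x₁ ε N (k * 2^m) :=
      (gseq_lift hD x₀ x₁ ε m n k).symm
    have eb : gseq hD x₀ x₁ ε m j = gseq hD x₀ x₁ ε N (j * 2^n) := by
      rw [hNdef, add_comm n m]
      exact (gseq_lift hD x₀ x₁ ε n m j).symm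
    have hka : k * 2^m ≤ 2^N := by
      rw [hNdef, pow_add]
      exact Nat.mul_le_mul_right _ hk
    have hjb : j * 2^n ≤ 2^N := by
      rw [hNdef, pow_add, mul_comm (2^n) (2^m)]
      exact Nat.mul_le_mul_right _ hj
    have hθa : θ' = ((k * 2^m : ℕ) : ℝ) / 2^N := by
      rw [hθeq, e2N]; push_cast; field_simp
    have hθb : θ'' = ((j * 2^n : ℕ) : ℝ) / 2^N := by
      rw [hθeq', e2N]; push_cast
      field_simp
    have h2Npos : (0:ℝ) < 2^N := by positivity
    have hBL : d * P ε N / 2^N ≤ L / 2^N := (div_le_div_iff_of_pos_right h2Npos).mpr (hbnd N)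
    rw [ea, eb]
    rcases le_total (k * 2^m) (j * 2^n) with hab | hab
    · have hdist := gseq_dist hD x₀ x₁ ε hx₀ hx₁ hε N _ _ hab hjb
      have hc0 : (0:ℝ) ≤ ((j * 2^n : ℕ):ℝ) - ((k * 2^m : ℕ):ℝ) := by
        have : ((k * 2^m : ℕ):ℝ) ≤ ((j * 2^n : ℕ):ℝ) := by exact_mod_cast hab
        linarith
      have habs : |θ' - θ''| = (((j * 2^n : ℕ):ℝ) - ((k * 2^m : ℕ):ℝ)) / 2^N := by
        rw [hθa, hθb, abs_sub_comm, div_sub_div_same, abs_div, abs_of_pos h2Npos,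
          abs_of_nonneg hc0]
      rw [habs]
      calc dist (gseq hD x₀ x₁ ε N (k * 2^m)) (gseq hD x₀ x₁ ε N (j * 2^n))
          ≤ (((j * 2^n : ℕ):ℝ) - ((k * 2^m : ℕ):ℝ)) * (d * P ε N / 2^N) := hdist
        _ ≤ (((j * 2^n : ℕ):ℝ) - ((k * 2^m : ℕ):ℝ)) * (L / 2^N) :=
            mul_le_mul_of_nonneg_left hBL hc0
        _ = L * ((((j * 2^n : ℕ):ℝ) - ((k * 2^m : ℕ):ℝ)) / 2^N) := by ring
    · have hdist := gseq_dist hD x₀ x₁ ε hx₀ hx₁ hε N _ _ hab hka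
      have hc0 : (0:ℝ) ≤ ((k * 2^m : ℕ):ℝ) - ((j * 2^n : ℕ):ℝ) := by
        have : ((j * 2^n : ℕ):ℝ) ≤ ((k * 2^m : ℕ):ℝ) := by exact_mod_cast hab
        linarith
      have habs : |θ' - θ''| = (((k * 2^m : ℕ):ℝ) - ((j * 2^n : ℕ):ℝ)) / 2^N := by
        rw [hθa, hθb, div_sub_div_same, abs_div, abs_of_pos h2Npos, abs_of_nonneg hc0]
      rw [habs, dist_comm]
      calc dist (gseq hD x₀ x₁ ε N (j * 2^n)) (gseq hD x₀ x₁ ε N (k * 2^m))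
          ≤ (((k * 2^m : ℕ):ℝ) - ((j * 2^n : ℕ):ℝ)) * (d * P ε N / 2^N) := hdist
        _ ≤ (((k * 2^m : ℕ):ℝ) - ((j * 2^n : ℕ):ℝ)) * (L / 2^N) :=
            mul_le_mul_of_nonneg_left hBL hc0
        _ = L * ((((k * 2^m : ℕ):ℝ) - ((j * 2^n : ℕ):ℝ)) / 2^N) := by ring
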